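/- arXiv:1710.07304 — 2 statements merged into one kernel-verified Lean document; each statement's English description precedes it below -/
import Mathlib

section
/- Let G be a linearly ordered abelian group. For all b, c in K((G)): (i) ot(b + c) ≤ ot(b) ♯ ot(c), and (ii) ot(b · c) ≤ ot(b) ⨳ ot(c), where ♯ is the Hessenberg natural sum and ⨳ the Hessenberg natural product of ordinals. -/
universe u

namespace Ordinal

/-- Natural (Hessenberg) sum of ordinals, as defined in Mathlib (December 2024). -/
noncomputable def nadd (a b : Ordinal.{u}) : Ordinal.{u} :=
  max (⨆ x : Set.Iio a, Order.succ (nadd x.1 b)) (⨆ x : Set.Iio b, Order.succ (nadd a x.1))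
termination_by (a, b)
decreasing_by all_goals cases x; decreasing_tactic

namespace NaturalOps
scoped infixl:65 " ♯ " => Ordinal.nadd
end NaturalOps

open NaturalOps

/-- Natural (Hessenberg) product of ordinals, as defined in Mathlib (December 2024). -/
noncomputable def nmul (a b : Ordinal.{u}) : Ordinal.{u} :=
  sInf {c | ∀ a' < a, ∀ b' < b, nmul a' b ♯ nmul a b' < c ♯ nmul a' b'}
termination_by (a, b)

namespace NaturalOps
scoped infixl:70 " ⨳ " => Ordinal.nmul
end NaturalOps

end Ordinal


namespace Ordinal

open NaturalOps

theorem lt_nadd_iff {a b c : Ordinal.{u}} :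
    a < b ♯ c ↔ (∃ b' < b, a ≤ b' ♯ c) ∨ ∃ c' < c, a ≤ b ♯ c' := by
  rw [nadd, lt_max_iff, Ordinal.lt_iSup_iff, Ordinal.lt_iSup_iff]
  simp only [Order.lt_succ_iff, Subtype.exists, Set.mem_Iio, exists_prop]

theorem nadd_le_iff {a b c : Ordinal.{u}} :
    b ♯ c ≤ a ↔ (∀ b' < b, b' ♯ c < a) ∧ ∀ c' < c, b ♯ c' < a := by
  rw [← not_lt, lt_nadd_iff]
  push_neg
  exact Iff.rfl

theorem nadd_lt_nadd_left {b c : Ordinal.{u}} (h : b < c) (a : Ordinal.{u}) : a ♯ b < a ♯ c :=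
  lt_nadd_iff.2 (Or.inr ⟨b, h, le_rfl⟩)

theorem nadd_lt_nadd_right {b c : Ordinal.{u}} (h : b < c) (a : Ordinal.{u}) : b ♯ a < c ♯ a :=
  lt_nadd_iff.2 (Or.inl ⟨b, h, le_rfl⟩)

theorem nadd_le_nadd_left {b c : Ordinal.{u}} (h : b ≤ c) (a : Ordinal.{u}) : a ♯ b ≤ a ♯ c := by
  rcases h.lt_or_eq with h | rfl
  · exact (nadd_lt_nadd_left h a).le
  · exact le_rfl

theorem nadd_le_nadd_right {b c : Ordinal.{u}} (h : b ≤ c) (a : Ordinal.{u}) : b ♯ a ≤ c ♯ a := by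
  rcases h.lt_or_eq with h | rfl
  · exact (nadd_lt_nadd_right h a).le
  · exact le_rfl

theorem nadd_comm (a b : Ordinal.{u}) : a ♯ b = b ♯ a := by
  induction a using Ordinal.induction generalizing b with
  | _ a IHa =>
  induction b using Ordinal.induction with
  | _ b IHb =>
  apply le_antisymm
  · rw [nadd_le_iff]
    refine ⟨fun a' ha' => ?_, fun b' hb' => ?_⟩
    · rw [IHa a' ha']; exact nadd_lt_nadd_left ha' b
    · rw [IHb b' hb']; exact nadd_lt_nadd_right hb' a
  · rw [nadd_le_iff]
    refine ⟨fun b' hb' => ?_, fun a' ha' => ?_⟩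
    · rw [← IHb b' hb']; exact nadd_lt_nadd_left hb' a
    · rw [← IHa a' ha']; exact nadd_lt_nadd_right ha' b

@[simp]
theorem nadd_zero (a : Ordinal.{u}) : a ♯ 0 = a := by
  induction a using Ordinal.induction with
  | _ a IH =>
  apply le_antisymm
  · rw [nadd_le_iff]
    refine ⟨fun a' ha' => by rw [IH a' ha']; exact ha', fun c' hc' => ?_⟩
    exact absurd hc' (not_lt_of_ge (zero_le (a := c')))
  · refine le_of_forall_lt fun c hc => ?_
    rw [← IH c hc]
    exact nadd_lt_nadd_right hc 0

@[simp]
theorem zero_nadd (a : Ordinal.{u}) : 0 ♯ a = a := by rw [nadd_comm, nadd_zero]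

theorem le_self_nadd {a b : Ordinal.{u}} : a ≤ a ♯ b :=
  calc a = a ♯ 0 := (nadd_zero a).symm
    _ ≤ a ♯ b := nadd_le_nadd_left (zero_le (a := b)) a

theorem le_nadd_self {a b : Ordinal.{u}} : a ≤ b ♯ a := by
  rw [nadd_comm]; exact le_self_nadd

theorem nadd_lt_nadd {a b c d : Ordinal.{u}} (h₁ : a < b) (h₂ : c < d) : a ♯ c < b ♯ d :=
  (nadd_lt_nadd_right h₁ c).trans (nadd_lt_nadd_left h₂ b)

theorem nadd_lt_nadd_of_lt_of_le {a b c d : Ordinal.{u}} (h₁ : a < b) (h₂ : c ≤ d) :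
    a ♯ c < b ♯ d :=
  (nadd_lt_nadd_right h₁ c).trans_le (nadd_le_nadd_left h₂ b)

theorem nadd_lt_nadd_of_le_of_lt {a b c d : Ordinal.{u}} (h₁ : a ≤ b) (h₂ : c < d) :
    a ♯ c < b ♯ d :=
  (nadd_le_nadd_right h₁ c).trans_lt (nadd_lt_nadd_left h₂ b)

theorem nadd_le_nadd {a b c d : Ordinal.{u}} (h₁ : a ≤ b) (h₂ : c ≤ d) : a ♯ c ≤ b ♯ d :=
  (nadd_le_nadd_right h₁ c).trans (nadd_le_nadd_left h₂ b)

theorem lt_of_nadd_lt_nadd_right {a b c : Ordinal.{u}} (h : b ♯ a < c ♯ a) : b < c :=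
  lt_of_not_ge fun h' => h.not_ge (nadd_le_nadd_right h' a)

theorem nadd_assoc (a b c : Ordinal.{u}) : a ♯ b ♯ c = a ♯ (b ♯ c) := by
  induction a using Ordinal.induction generalizing b c with
  | _ a IHa =>
  induction b using Ordinal.induction generalizing c with
  | _ b IHb =>
  induction c using Ordinal.induction with
  | _ c IHc =>
  apply le_antisymm
  · rw [nadd_le_iff]
    refine ⟨fun d hd => ?_, fun c' hc' => ?_⟩
    · rcases lt_nadd_iff.1 hd with ⟨a', ha', hd⟩ | ⟨b', hb', hd⟩
      · calc d ♯ c ≤ a' ♯ b ♯ c := nadd_le_nadd_right hd c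
          _ = a' ♯ (b ♯ c) := IHa a' ha' b c
          _ < a ♯ (b ♯ c) := nadd_lt_nadd_right ha' _
      · calc d ♯ c ≤ a ♯ b' ♯ c := nadd_le_nadd_right hd c
          _ = a ♯ (b' ♯ c) := IHb b' hb' c
          _ < a ♯ (b ♯ c) := nadd_lt_nadd_left (nadd_lt_nadd_right hb' c) a
    · rw [IHc c' hc']; exact nadd_lt_nadd_left (nadd_lt_nadd_left hc' b) a
  · rw [nadd_le_iff]
    refine ⟨fun a' ha' => ?_, fun d hd => ?_⟩
    · rw [← IHa a' ha']; exact nadd_lt_nadd_right (nadd_lt_nadd_right ha' b) c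
    · rcases lt_nadd_iff.1 hd with ⟨b', hb', hd⟩ | ⟨c', hc', hd⟩
      · calc a ♯ d ≤ a ♯ (b' ♯ c) := nadd_le_nadd_left hd a
          _ = a ♯ b' ♯ c := (IHb b' hb' c).symm
          _ < a ♯ b ♯ c := nadd_lt_nadd_right (nadd_lt_nadd_left hb' a) c
      · calc a ♯ d ≤ a ♯ (b ♯ c') := nadd_le_nadd_left hd a
          _ = a ♯ b ♯ c' := (IHc c' hc').symm
          _ < a ♯ b ♯ c := nadd_lt_nadd_left hc' _

instance nadd_isAssoc : Std.Associative (α := Ordinal.{u}) (· ♯ ·) := ⟨nadd_assoc⟩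

instance nadd_isComm : Std.Commutative (α := Ordinal.{u}) (· ♯ ·) := ⟨nadd_comm⟩

theorem nadd_right_comm (a b c : Ordinal.{u}) : a ♯ b ♯ c = a ♯ c ♯ b := by
  rw [nadd_assoc, nadd_comm b, ← nadd_assoc]

theorem lt_cancel_aux {x y x' y' t : Ordinal.{u}} (h : x' < y') (hx : x' = x ♯ t)
    (hy : y' = y ♯ t) : x < y := by
  rw [hx, hy] at h
  exact lt_of_nadd_lt_nadd_right h

theorem add_le_nadd (a b : Ordinal.{u}) : a + b ≤ a ♯ b := by
  induction b using Ordinal.induction with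
  | _ b IH =>
  refine le_of_forall_lt fun d hd => ?_
  rcases eq_or_ne b 0 with rfl | hb
  · rw [add_zero] at hd; rw [nadd_zero]; exact hd
  rcases (Ordinal.lt_add_iff hb).1 hd with ⟨b', hb', hd'⟩
  exact hd'.trans_lt ((IH b' hb').trans_lt (nadd_lt_nadd_left hb' a))

theorem nadd_one (a : Ordinal.{u}) : a ♯ 1 = a + 1 := by
  induction a using Ordinal.induction with
  | _ a IH =>
  refine le_antisymm ?_ (add_le_nadd a 1)
  rw [nadd_le_iff]
  refine ⟨fun a' ha' => ?_, fun c' hc' => ?_⟩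
  · rw [IH a' ha']; exact Order.lt_add_one_iff.2 (Order.add_one_le_of_lt ha')
  · rw [Ordinal.lt_one_iff_zero.1 hc', nadd_zero]; exact Order.lt_add_one_iff.2 le_rfl

theorem nmul_def (a b : Ordinal.{u}) :
    a ⨳ b = sInf {c | ∀ a' < a, ∀ b' < b, a' ⨳ b ♯ a ⨳ b' < c ♯ a' ⨳ b'} := by
  rw [nmul]

theorem nmul_nonempty (a b : Ordinal.{u}) :
    {c : Ordinal.{u} | ∀ a' < a, ∀ b' < b, a' ⨳ b ♯ a ⨳ b' < c ♯ a' ⨳ b'}.Nonempty := by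
  obtain ⟨c, hc⟩ : BddAbove (Set.range
      (fun x : Set.Iio a × Set.Iio b => x.1.1 ⨳ b ♯ a ⨳ x.2.1)) := bddAbove_of_small
  exact ⟨Order.succ c, fun x hx y hy =>
    (Order.lt_succ_of_le (hc ⟨(⟨x, hx⟩, ⟨y, hy⟩), rfl⟩)).trans_le le_self_nadd⟩

theorem nmul_nadd_lt {a b a' b' : Ordinal.{u}} (ha : a' < a) (hb : b' < b) :
    a' ⨳ b ♯ a ⨳ b' < a ⨳ b ♯ a' ⨳ b' := by
  rw [nmul_def a b]
  exact csInf_mem (nmul_nonempty a b) a' ha b' hb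

theorem nmul_nadd_le {a b a' b' : Ordinal.{u}} (ha : a' ≤ a) (hb : b' ≤ b) :
    a' ⨳ b ♯ a ⨳ b' ≤ a ⨳ b ♯ a' ⨳ b' := by
  rcases lt_or_eq_of_le ha with ha | rfl
  · rcases lt_or_eq_of_le hb with hb | rfl
    · exact (nmul_nadd_lt ha hb).le
    · rw [nadd_comm]
  · exact le_rfl

theorem lt_nmul_iff {a b c : Ordinal.{u}} :
    c < a ⨳ b ↔ ∃ a' < a, ∃ b' < b, c ♯ a' ⨳ b' ≤ a' ⨳ b ♯ a ⨳ b' := by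
  refine ⟨fun h => ?_, ?_⟩
  · rw [nmul_def] at h
    have := notMem_of_lt_csInf h ⟨0, fun _ _ => zero_le⟩
    simpa using this
  · rintro ⟨a', ha, b', hb, h⟩
    exact lt_of_nadd_lt_nadd_right (h.trans_lt (nmul_nadd_lt ha hb))

theorem nmul_le_iff {a b c : Ordinal.{u}} :
    a ⨳ b ≤ c ↔ ∀ a' < a, ∀ b' < b, a' ⨳ b ♯ a ⨳ b' < c ♯ a' ⨳ b' := by
  rw [← not_lt, lt_nmul_iff]
  push_neg
  exact Iff.rfl

theorem nmul_comm (a b : Ordinal.{u}) : a ⨳ b = b ⨳ a := by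
  induction a using Ordinal.induction generalizing b with
  | _ a IHa =>
  induction b using Ordinal.induction with
  | _ b IHb =>
  rw [nmul_def a b, nmul_def b a]
  congr 1
  ext x
  constructor <;> intro H c hc d hd
  · have h1 := H d hd c hc
    rw [IHa d hd b, IHb c hc, IHa d hd c, nadd_comm (b ⨳ d)] at h1
    exact h1
  · have h1 := H d hd c hc
    rw [← IHb d hd, ← IHa c hc b, ← IHa c hc d, nadd_comm (a ⨳ d)] at h1
    exact h1

@[simp]
theorem nmul_zero (a : Ordinal.{u}) : a ⨳ 0 = 0 := by
  refine le_antisymm ?_ (zero_le)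
  rw [nmul_le_iff]
  intro _ _ b hb
  exact absurd hb (not_lt_of_ge (zero_le (a := b)))

@[simp]
theorem zero_nmul (a : Ordinal.{u}) : 0 ⨳ a = 0 := by rw [nmul_comm, nmul_zero]

theorem nmul_lt_nmul_of_pos_left {a b c : Ordinal.{u}} (h₁ : a < b) (h₂ : 0 < c) :
    c ⨳ a < c ⨳ b :=
  lt_nmul_iff.2 ⟨0, h₂, a, h₁, by simp⟩

theorem nmul_lt_nmul_of_pos_right {a b c : Ordinal.{u}} (h₁ : a < b) (h₂ : 0 < c) :
    a ⨳ c < b ⨳ c :=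
  lt_nmul_iff.2 ⟨a, h₁, 0, h₂, by simp⟩

@[simp]
theorem nmul_one (a : Ordinal.{u}) : a ⨳ 1 = a := by
  induction a using Ordinal.induction with
  | _ a IH =>
  apply le_antisymm
  · rw [nmul_le_iff]
    intro a' ha' b' hb'
    rw [Ordinal.lt_one_iff_zero.1 hb', nmul_zero, nmul_zero, nadd_zero, nadd_zero, IH a' ha']
    exact ha'
  · refine le_of_forall_lt fun c hc => ?_
    rw [← IH c hc]
    exact nmul_lt_nmul_of_pos_right hc zero_lt_one

theorem nmul_le_nmul_left {a b : Ordinal.{u}} (h : a ≤ b) (c : Ordinal.{u}) : c ⨳ a ≤ c ⨳ b := by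
  rcases h.lt_or_eq with h | rfl
  · rcases eq_or_ne c 0 with rfl | hc
    · simp
    · exact (nmul_lt_nmul_of_pos_left h (lt_of_le_of_ne (zero_le (a := c)) hc.symm)).le
  · exact le_rfl

theorem nmul_le_nmul_right {a b : Ordinal.{u}} (h : a ≤ b) (c : Ordinal.{u}) :
    a ⨳ c ≤ b ⨳ c := by
  rw [nmul_comm, nmul_comm b]; exact nmul_le_nmul_left h c

theorem nmul_nadd (a b c : Ordinal.{u}) : a ⨳ (b ♯ c) = a ⨳ b ♯ a ⨳ c := by
  induction a using Ordinal.induction generalizing b c with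
  | _ a IHa =>
  induction b using Ordinal.induction generalizing c with
  | _ b IHb =>
  induction c using Ordinal.induction with
  | _ c IHc =>
  apply le_antisymm
  · rw [nmul_le_iff]
    intro a' ha d hd
    rcases lt_nadd_iff.1 hd with ⟨b', hb, hd⟩ | ⟨c', hc, hd⟩
    · have h := nadd_lt_nadd_of_lt_of_le (nmul_nadd_lt ha hb) (nmul_nadd_le ha.le hd)
      rw [IHa a' ha b' c, IHb b' hb c] at h
      rw [IHa a' ha b c]
      exact lt_cancel_aux (t := a ⨳ b' ♯ a' ⨳ b') h (by ac_rfl) (by ac_rfl)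
    · have h := nadd_lt_nadd_of_lt_of_le (nmul_nadd_lt ha hc) (nmul_nadd_le ha.le hd)
      rw [IHa a' ha b c', IHc c' hc] at h
      rw [IHa a' ha b c]
      exact lt_cancel_aux (t := a ⨳ c' ♯ a' ⨳ c') h (by ac_rfl) (by ac_rfl)
  · rw [nadd_le_iff]
    refine ⟨fun d hd => ?_, fun d hd => ?_⟩
    · rcases lt_nmul_iff.1 hd with ⟨a', ha, b', hb, H⟩
      have h := nmul_nadd_lt ha (nadd_lt_nadd_right hb c)
      rw [IHa a' ha b c, IHa a' ha b' c, IHb b' hb c] at h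
      have H' := nadd_le_nadd_right H (a ⨳ c ♯ a' ⨳ c)
      exact lt_cancel_aux (t := a' ⨳ b' ♯ a' ⨳ c)
        (H'.trans_lt (lt_of_eq_of_lt (by ac_rfl) h)) (by ac_rfl) (by ac_rfl)
    · rcases lt_nmul_iff.1 hd with ⟨a', ha, c', hc, H⟩
      have h := nmul_nadd_lt ha (nadd_lt_nadd_left hc b)
      rw [IHa a' ha b c, IHa a' ha b c', IHc c' hc] at h
      have H' := nadd_le_nadd_right H (a ⨳ b ♯ a' ⨳ b)
      exact lt_cancel_aux (t := a' ⨳ b ♯ a' ⨳ c')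
        (H'.trans_lt (lt_of_eq_of_lt (by ac_rfl) h)) (by ac_rfl) (by ac_rfl)

theorem nadd_nmul (a b c : Ordinal.{u}) : (a ♯ b) ⨳ c = a ⨳ c ♯ b ⨳ c := by
  rw [nmul_comm, nmul_nadd, nmul_comm c, nmul_comm c]

theorem nmul_add_one (a b : Ordinal.{u}) : a ⨳ (b + 1) = a ⨳ b ♯ a := by
  rw [← nadd_one, nmul_nadd, nmul_one]

theorem nmul_nat_assoc (x y : Ordinal.{u}) (n : ℕ) :
    x ⨳ y ⨳ (n : Ordinal) = x ⨳ (y ⨳ (n : Ordinal)) := by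
  induction n with
  | zero => simp
  | succ n ih => rw [Nat.cast_succ, nmul_add_one, nmul_add_one, ih, nmul_nadd]

theorem nmul_nat_right_comm (x y : Ordinal.{u}) (n : ℕ) :
    x ⨳ (n : Ordinal) ⨳ y = x ⨳ y ⨳ (n : Ordinal) := by
  induction n with
  | zero => simp
  | succ n ih => rw [Nat.cast_succ, nmul_add_one, nmul_add_one, nadd_nmul, ih]

end Ordinal

open Ordinal NaturalOps

/-- The ordinal order type of a well-ordered subset of a linear order. -/
noncomputable def orderTypeSet {Γ : Type*} [LinearOrder Γ] (s : Set Γ) (hs : s.IsWF) : Ordinal :=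
  letI : IsWellFounded s (· < ·) := ⟨hs⟩
  Ordinal.type ((· < ·) : s → s → Prop)

/-- The order type `ot b` of the support of a Hahn series. -/
noncomputable def HahnSeries.ot {Γ : Type*} [LinearOrder Γ] {R : Type*} [Zero R]
    (b : HahnSeries Γ R) : Ordinal :=
  orderTypeSet b.support b.isWF_support

/-- The degree of a Hahn series: the largest ordinal `β` with `ω ^ β ≤ ot b`
(for a nonzero series), implemented as the base-`ω` ordinal logarithm of `ot b`. -/
noncomputable def HahnSeries.deg {Γ : Type*} [LinearOrder Γ] {R : Type*} [Zero R]
    (b : HahnSeries Γ R) : Ordinal :=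
  Ordinal.log Ordinal.omega0 b.ot

open Pointwise

namespace CarruthAux

theorem exists_lt_omega0_opow_mul {γ x : Ordinal} (hx : x ≠ 0) (h : x < ω ^ γ) :
    ∃ δ < γ, ∃ n : ℕ, x < ω ^ δ * n := by
  refine ⟨Ordinal.log ω x, (Ordinal.lt_opow_iff_log_lt one_lt_omega0 hx).1 h, ?_⟩
  have h2 : x < ω ^ (Ordinal.log ω x) * ω := by
    rw [← Ordinal.opow_succ]
    exact Ordinal.lt_opow_succ_log_self one_lt_omega0 x
  obtain ⟨c, hc, hxc⟩ := (Ordinal.lt_mul_iff_of_isSuccLimit isSuccLimit_omega0).1 h2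
  obtain ⟨n, rfl⟩ := Ordinal.lt_omega0.1 hc
  exact ⟨n, hxc⟩

theorem pack (ε : Ordinal) :
    (∀ x y, x < ω ^ ε → y < ω ^ ε → x ♯ y < ω ^ ε) ∧
    (∀ (j : ℕ) (σ : Ordinal), σ < ω ^ ε → ω ^ ε * j ♯ σ = ω ^ ε * j + σ) ∧
    (∀ n m : ℕ, ω ^ ε * n ♯ ω ^ ε * m = ω ^ ε * ((n : Ordinal) + m)) := by
  induction ε using Ordinal.induction with
  | _ ε IH =>
  have hpos : (0 : Ordinal) < ω ^ ε := Ordinal.opow_pos ε omega0_pos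
  have hne : (ω ^ ε : Ordinal) ≠ 0 := hpos.ne'
  -- Part 1 : closure of ω^ε under natural addition
  have part1 : ∀ x y, x < ω ^ ε → y < ω ^ ε → x ♯ y < ω ^ ε := by
    intro x y hx hy
    rcases eq_or_ne x 0 with rfl | hx0
    · rwa [zero_nadd]
    rcases eq_or_ne y 0 with rfl | hy0
    · rwa [nadd_zero]
    obtain ⟨δ, hδ, n, hn⟩ := exists_lt_omega0_opow_mul hx0 hx
    obtain ⟨δ', hδ', m, hm⟩ := exists_lt_omega0_opow_mul hy0 hy
    have hn' : x < ω ^ max δ δ' * n :=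
      hn.trans_le (mul_le_mul_left (Ordinal.opow_le_opow_right omega0_pos (le_max_left _ _)) _)
    have hm' : y < ω ^ max δ δ' * m :=
      hm.trans_le (mul_le_mul_left (Ordinal.opow_le_opow_right omega0_pos (le_max_right _ _)) _)
    have h3 := nadd_lt_nadd hn' hm'
    rw [(IH _ (max_lt hδ hδ')).2.2 n m] at h3
    have h4 : ω ^ max δ δ' * ((n : Ordinal) + m) < ω ^ max δ δ' * ω := by
      refine mul_lt_mul_of_pos_left ?_ (Ordinal.opow_pos _ omega0_pos)
      exact_mod_cast nat_lt_omega0 (n + m)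
    have h5 : ω ^ max δ δ' * ω ≤ ω ^ ε := by
      rw [← Ordinal.opow_succ]
      exact Ordinal.opow_le_opow_right omega0_pos (Order.succ_le_of_lt (max_lt hδ hδ'))
    exact h3.trans (h4.trans_le h5)
  refine ⟨part1, ?_⟩
  -- Part 2
  have part2 : ∀ (j : ℕ) (σ : Ordinal), σ < ω ^ ε → ω ^ ε * j ♯ σ = ω ^ ε * j + σ := by
    intro j
    induction j using Nat.strong_induction_on with
    | _ j IHj =>
    intro σ
    induction σ using Ordinal.induction with
    | _ σ IHσ =>
    intro hσ
    refine le_antisymm ?_ (add_le_nadd _ _)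
    rw [nadd_le_iff]
    constructor
    · intro x' hx'
      have hk0 : x' / ω ^ ε < (j : Ordinal) := (Ordinal.div_lt hne).2 hx'
      obtain ⟨k, hk⟩ := Ordinal.lt_omega0.1 (hk0.trans (nat_lt_omega0 j))
      have hkj : k < j := by rw [hk] at hk0; exact_mod_cast hk0
      have hρ : x' % ω ^ ε < ω ^ ε := Ordinal.mod_lt _ hne
      have hx'eq : ω ^ ε * k + x' % ω ^ ε = x' := by
        rw [← hk]; exact Ordinal.div_add_mod x' (ω ^ ε)
      calc x' ♯ σ = (ω ^ ε * k ♯ x' % ω ^ ε) ♯ σ := by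
            rw [IHj k hkj _ hρ, hx'eq]
        _ = ω ^ ε * k ♯ (x' % ω ^ ε ♯ σ) := nadd_assoc _ _ _
        _ = ω ^ ε * k + (x' % ω ^ ε ♯ σ) := IHj k hkj _ (part1 _ _ hρ hσ)
        _ < ω ^ ε * k + ω ^ ε := add_lt_add_right (part1 _ _ hρ hσ) _
        _ = ω ^ ε * ((k : Ordinal) + 1) := by rw [mul_add, mul_one]
        _ ≤ ω ^ ε * j := by
            refine mul_le_mul_right ?_ _
            exact_mod_cast Nat.succ_le_of_lt hkj
        _ ≤ ω ^ ε * j + σ := le_self_add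
    · intro σ' hσ'
      rw [IHσ σ' hσ' (hσ'.trans hσ)]
      exact add_lt_add_right hσ' _
  refine ⟨part2, ?_⟩
  -- Part 3
  have key : ∀ p : ℕ, (∀ q, q < p → ∀ n m : ℕ, n + m = q →
      ω ^ ε * n ♯ ω ^ ε * m = ω ^ ε * ((n : Ordinal) + m)) →
      ∀ n m : ℕ, n + m = p → ∀ x' < ω ^ ε * n, x' ♯ ω ^ ε * m < ω ^ ε * ((n : Ordinal) + m) := by
    intro p IHp n m hp x' hx'
    have hk0 : x' / ω ^ ε < (n : Ordinal) := (Ordinal.div_lt hne).2 hx'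
    obtain ⟨k, hk⟩ := Ordinal.lt_omega0.1 (hk0.trans (nat_lt_omega0 n))
    have hkn : k < n := by rw [hk] at hk0; exact_mod_cast hk0
    have hρ : x' % ω ^ ε < ω ^ ε := Ordinal.mod_lt _ hne
    have hx'eq : ω ^ ε * k + x' % ω ^ ε = x' := by
      rw [← hk]; exact Ordinal.div_add_mod x' (ω ^ ε)
    calc x' ♯ ω ^ ε * m = (ω ^ ε * k ♯ x' % ω ^ ε) ♯ ω ^ ε * m := by
          rw [part2 k _ hρ, hx'eq]
      _ = (ω ^ ε * k ♯ ω ^ ε * m) ♯ x' % ω ^ ε := nadd_right_comm _ _ _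
      _ = ω ^ ε * ((k : Ordinal) + m) ♯ x' % ω ^ ε := by
          rw [IHp (k + m) (by omega) k m rfl]
      _ = ω ^ ε * ((k + m : ℕ) : Ordinal) ♯ x' % ω ^ ε := by norm_cast
      _ = ω ^ ε * ((k + m : ℕ) : Ordinal) + x' % ω ^ ε := part2 _ _ hρ
      _ < ω ^ ε * ((k + m : ℕ) : Ordinal) + ω ^ ε := add_lt_add_right hρ _
      _ = ω ^ ε * (((k + m : ℕ) : Ordinal) + 1) := by rw [mul_add, mul_one]
      _ ≤ ω ^ ε * ((n : Ordinal) + m) := by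
          refine mul_le_mul_right ?_ _
          have : ((k + m + 1 : ℕ) : Ordinal) ≤ ((n + m : ℕ) : Ordinal) := by
            exact_mod_cast by omega
          push_cast at this ⊢
          exact this
  have part3 : ∀ p (n m : ℕ), n + m = p →
      ω ^ ε * n ♯ ω ^ ε * m = ω ^ ε * ((n : Ordinal) + m) := by
    intro p
    induction p using Nat.strong_induction_on with
    | _ p IHp =>
    intro n m hp
    refine le_antisymm ?_ ?_
    · rw [nadd_le_iff]
      refine ⟨fun x' hx' => key p (fun q hq n' m' hq' => IHp q hq n' m' hq') n m hp x' hx',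
        fun y' hy' => ?_⟩
      rw [nadd_comm]
      have h4 := key p (fun q hq n' m' hq' => IHp q hq n' m' hq') m n (by omega) y' hy'
      rwa [show ((m : Ordinal) + n) = ((n : Ordinal) + m) by norm_cast; omega] at h4
    · rw [mul_add]
      exact add_le_nadd _ _
  exact fun n m => part3 (n + m) n m rfl

theorem nadd_lt_opow {γ x y : Ordinal} (hx : x < ω ^ γ) (hy : y < ω ^ γ) : x ♯ y < ω ^ γ :=
  (pack γ).1 x y hx hy

theorem opow_mul_nadd {ε : Ordinal} (j : ℕ) {σ : Ordinal} (hσ : σ < ω ^ ε) :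
    ω ^ ε * j ♯ σ = ω ^ ε * j + σ :=
  (pack ε).2.1 j σ hσ

theorem opow_mul_nadd_mul (ε : Ordinal) (n m : ℕ) :
    ω ^ ε * n ♯ ω ^ ε * m = ω ^ ε * ((n : Ordinal) + m) :=
  (pack ε).2.2 n m


theorem opow_nmul_nat (δ : Ordinal) (n : ℕ) : ω ^ δ ⨳ (n : Ordinal) = ω ^ δ * n := by
  induction n with
  | zero => simp
  | succ n ih =>
    have hc : ((n + 1 : ℕ) : Ordinal) = (n : Ordinal) + 1 := by norm_cast
    rw [hc, nmul_add_one, ih]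
    have h := opow_mul_nadd_mul δ n 1
    rw [Nat.cast_one, mul_one] at h
    rw [h, mul_add, mul_one]

theorem nmul_opow_lt {μ ν a' : Ordinal}
    (hE : ∀ δ, δ < μ → ω ^ δ ⨳ ω ^ ν = ω ^ (δ ♯ ν)) (ha' : a' < ω ^ μ) :
    a' ⨳ ω ^ ν < ω ^ (μ ♯ ν) := by
  rcases eq_or_ne a' 0 with rfl | h0
  · rw [zero_nmul]; exact Ordinal.opow_pos _ omega0_pos
  obtain ⟨δ, hδ, n, hn⟩ := exists_lt_omega0_opow_mul h0 ha'
  calc a' ⨳ ω ^ ν ≤ (ω ^ δ * n) ⨳ ω ^ ν := nmul_le_nmul_right hn.le _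
    _ = (ω ^ δ ⨳ (n : Ordinal)) ⨳ ω ^ ν := by rw [opow_nmul_nat]
    _ = (ω ^ δ ⨳ ω ^ ν) ⨳ (n : Ordinal) := by
        rw [nmul_nat_right_comm]
    _ = ω ^ (δ ♯ ν) ⨳ (n : Ordinal) := by rw [hE δ hδ]
    _ = ω ^ (δ ♯ ν) * n := opow_nmul_nat _ n
    _ < ω ^ (μ ♯ ν) := by
        have h1 : ω ^ (δ ♯ ν) * n < ω ^ (δ ♯ ν) * ω :=
          mul_lt_mul_of_pos_left (nat_lt_omega0 n) (Ordinal.opow_pos _ omega0_pos)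
        have h2 : ω ^ (δ ♯ ν) * ω ≤ ω ^ (μ ♯ ν) := by
          rw [← Ordinal.opow_succ]
          exact Ordinal.opow_le_opow_right omega0_pos
            (Order.succ_le_of_lt (nadd_lt_nadd_right hδ ν))
        exact h1.trans_le h2

theorem omega0_opow_nmul (μ ν : Ordinal) : ω ^ μ ⨳ ω ^ ν = ω ^ (μ ♯ ν) := by
  suffices h : ∀ o μ ν : Ordinal, μ ♯ ν ≤ o → ω ^ μ ⨳ ω ^ ν = ω ^ (μ ♯ ν) from h _ μ ν le_rfl
  intro o
  induction o using Ordinal.induction with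
  | _ o IHo =>
  intro μ ν ho
  have hE : ∀ μ' ν' : Ordinal, μ' ♯ ν' < μ ♯ ν → ω ^ μ' ⨳ ω ^ ν' = ω ^ (μ' ♯ ν') :=
    fun μ' ν' h => IHo (μ' ♯ ν') (h.trans_le ho) μ' ν' le_rfl
  refine le_antisymm ?_ ?_
  · rw [nmul_le_iff]
    intro a' ha' b' hb'
    refine lt_of_lt_of_le ?_ le_self_nadd
    have h1 : a' ⨳ ω ^ ν < ω ^ (μ ♯ ν) :=
      nmul_opow_lt (fun δ hδ => hE δ ν (nadd_lt_nadd_right hδ ν)) ha'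
    have h2 : ω ^ μ ⨳ b' < ω ^ (μ ♯ ν) := by
      rw [nmul_comm]
      have h3 := nmul_opow_lt (μ := ν) (ν := μ)
        (fun δ hδ => by rw [hE δ μ (by rw [nadd_comm]; exact nadd_lt_nadd_left hδ μ)]) hb'
      rwa [nadd_comm ν μ] at h3
    exact nadd_lt_opow h1 h2
  · refine le_of_not_gt fun hlt => lt_irrefl (ω ^ μ ⨳ ω ^ ν) ?_
    have main : ∀ c, c < ω ^ (μ ♯ ν) → c < ω ^ μ ⨳ ω ^ ν := by
      intro c hc
      have hpos : 0 < ω ^ μ ⨳ ω ^ ν := by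
        have h1 := nmul_lt_nmul_of_pos_right (Ordinal.opow_pos μ omega0_pos)
          (Ordinal.opow_pos ν omega0_pos)
        rwa [zero_nmul] at h1
      rcases eq_or_ne c 0 with rfl | hc0
      · exact hpos
      obtain ⟨ξ, hξ, k, hk⟩ := exists_lt_omega0_opow_mul hc0 hc
      rcases lt_nadd_iff.1 hξ with ⟨μ', hμ', hle⟩ | ⟨ν', hν', hle⟩
      · have hch : c < ω ^ (μ' ♯ ν) * k :=
          hk.trans_le (mul_le_mul_left
            (Ordinal.opow_le_opow_right omega0_pos hle) _)
        have heq : ω ^ (μ' ♯ ν) * k = (ω ^ μ' * k) ⨳ ω ^ ν := by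
          rw [← opow_nmul_nat (μ' ♯ ν) k, ← hE μ' ν (nadd_lt_nadd_right hμ' ν),
            ← opow_nmul_nat μ' k, nmul_nat_right_comm]
        have hlt2 : (ω ^ μ' * k) ⨳ ω ^ ν < ω ^ μ ⨳ ω ^ ν := by
          refine nmul_lt_nmul_of_pos_right ?_ (Ordinal.opow_pos _ omega0_pos)
          have hq1 : ω ^ μ' * k < ω ^ μ' * ω :=
            mul_lt_mul_of_pos_left (nat_lt_omega0 k) (Ordinal.opow_pos _ omega0_pos)
          have hq2 : ω ^ μ' * ω ≤ ω ^ μ := by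
            rw [← Ordinal.opow_succ]
            exact Ordinal.opow_le_opow_right omega0_pos (Order.succ_le_of_lt hμ')
          exact hq1.trans_le hq2
        rw [heq] at hch
        exact hch.trans hlt2
      · have hch : c < ω ^ (μ ♯ ν') * k :=
          hk.trans_le (mul_le_mul_left
            (Ordinal.opow_le_opow_right omega0_pos hle) _)
        have heq : ω ^ (μ ♯ ν') * k = ω ^ μ ⨳ (ω ^ ν' * k) := by
          rw [← opow_nmul_nat (μ ♯ ν') k, ← hE μ ν' (nadd_lt_nadd_left hν' μ),
            ← opow_nmul_nat ν' k, nmul_nat_assoc]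
        have hlt2 : ω ^ μ ⨳ (ω ^ ν' * k) < ω ^ μ ⨳ ω ^ ν := by
          refine nmul_lt_nmul_of_pos_left ?_ (Ordinal.opow_pos _ omega0_pos)
          have hq1 : ω ^ ν' * k < ω ^ ν' * ω :=
            mul_lt_mul_of_pos_left (nat_lt_omega0 k) (Ordinal.opow_pos _ omega0_pos)
          have hq2 : ω ^ ν' * ω ≤ ω ^ ν := by
            rw [← Ordinal.opow_succ]
            exact Ordinal.opow_le_opow_right omega0_pos (Order.succ_le_of_lt hν')
          exact hq1.trans_le hq2
        rw [heq] at hch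
        exact hch.trans hlt2
    exact main _ hlt
  
theorem nadd_nmul_lt_opow {μ ν a' b' : Ordinal} (ha' : a' < ω ^ μ) (hb' : b' < ω ^ ν) :
    a' ⨳ ω ^ ν ♯ ω ^ μ ⨳ b' < ω ^ (μ ♯ ν) := by
  have h1 : a' ⨳ ω ^ ν < ω ^ (μ ♯ ν) :=
    nmul_opow_lt (fun δ _ => omega0_opow_nmul δ ν) ha'
  have h2 : ω ^ μ ⨳ b' < ω ^ (μ ♯ ν) := by
    rw [nmul_comm]
    have h3 := nmul_opow_lt (μ := ν) (ν := μ) (fun δ _ => omega0_opow_nmul δ μ) hb'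
    rwa [nadd_comm ν μ] at h3
  exact nadd_lt_opow h1 h2

theorem opow_nadd_rest {μ ρ : Ordinal} (n : ℕ) (hn : 1 ≤ n) (hρ : ρ < ω ^ μ) :
    ω ^ μ ♯ (ω ^ μ * ((n - 1 : ℕ) : Ordinal) + ρ) = ω ^ μ * n + ρ := by
  calc ω ^ μ ♯ (ω ^ μ * ((n - 1 : ℕ) : Ordinal) + ρ)
      = ω ^ μ ♯ (ω ^ μ * ((n - 1 : ℕ) : Ordinal) ♯ ρ) := by rw [opow_mul_nadd _ hρ]
    _ = (ω ^ μ * ((1 : ℕ) : Ordinal) ♯ ω ^ μ * ((n - 1 : ℕ) : Ordinal)) ♯ ρ := by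
        rw [← nadd_assoc, Nat.cast_one, mul_one]
    _ = ω ^ μ * (((1 : ℕ) : Ordinal) + ((n - 1 : ℕ) : Ordinal)) ♯ ρ := by
        rw [opow_mul_nadd_mul]
    _ = ω ^ μ * n ♯ ρ := by
        congr 1
        congr 1
        norm_cast
        omega
    _ = ω ^ μ * n + ρ := opow_mul_nadd n hρ


section SetPart
variable {Γ : Type*} [LinearOrder Γ] {s t : Set Γ}

theorem ots_congr {s t : Set Γ} (h : s = t) (hs : s.IsWF) (ht : t.IsWF) :
    orderTypeSet s hs = orderTypeSet t ht := by subst h; rfl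

theorem ots_mono (hs : s.IsWF) (ht : t.IsWF) (h : s ⊆ t) :
    orderTypeSet s hs ≤ orderTypeSet t ht := by
  letI : IsWellFounded s (· < ·) := ⟨hs⟩
  letI : IsWellFounded t (· < ·) := ⟨ht⟩
  exact RelEmbedding.ordinal_type_le
    ⟨⟨Set.inclusion h, Set.inclusion_injective h⟩, Iff.rfl⟩

theorem ots_eq_typein (hs : s.IsWF) {x : Γ} (hx : x ∈ s) :
    letI : IsWellFounded s (· < ·) := ⟨hs⟩
    orderTypeSet (s ∩ Set.Iio x) (hs.mono Set.inter_subset_left) =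
      Ordinal.typein ((· < ·) : s → s → Prop) ⟨x, hx⟩ := by
  letI : IsWellFounded s (· < ·) := ⟨hs⟩
  letI : IsWellFounded ↥(s ∩ Set.Iio x) (· < ·) := ⟨hs.mono Set.inter_subset_left⟩
  rw [← Ordinal.type_subrel]
  exact RelIso.ordinal_type_eq
    { toFun := fun y => ⟨⟨y.1, y.2.1⟩, y.2.2⟩
      invFun := fun z => ⟨z.1.1, ⟨z.1.2, z.2⟩⟩
      left_inv := fun y => rfl
      right_inv := fun z => rfl
      map_rel_iff' := Iff.rfl }

theorem ots_inter_Iio_lt (hs : s.IsWF) {x : Γ} (hx : x ∈ s) :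
    orderTypeSet (s ∩ Set.Iio x) (hs.mono Set.inter_subset_left) < orderTypeSet s hs := by
  letI : IsWellFounded s (· < ·) := ⟨hs⟩
  rw [ots_eq_typein hs hx]
  exact Ordinal.typein_lt_type _ _

theorem exists_ots_inter_Iio (hs : s.IsWF) {o : Ordinal} (ho : o < orderTypeSet s hs) :
    ∃ x, ∃ hx : x ∈ s, orderTypeSet (s ∩ Set.Iio x) (hs.mono Set.inter_subset_left) = o := by
  letI : IsWellFounded s (· < ·) := ⟨hs⟩
  have ho' : o < Ordinal.type ((· < ·) : s → s → Prop) := ho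
  obtain ⟨x, hx⟩ : ∃ a : ↥s, Ordinal.typein ((· < ·) : s → s → Prop) a = o :=
    ⟨Ordinal.enum ((· < ·) : s → s → Prop) ⟨o, ho'⟩, Ordinal.typein_enum _ _⟩
  refine ⟨x.1, x.2, ?_⟩
  rw [ots_eq_typein hs x.2]
  exact hx

theorem ots_le_of_forall_lt {c : Ordinal} (hs : s.IsWF)
    (H : ∀ x, ∀ _ : x ∈ s,
      orderTypeSet (s ∩ Set.Iio x) (hs.mono Set.inter_subset_left) < c) :
    orderTypeSet s hs ≤ c := by
  by_contra hc
  push_neg at hc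
  obtain ⟨x, hx, hxeq⟩ := exists_ots_inter_Iio hs hc
  exact absurd (hxeq ▸ H x hx) (lt_irrefl c)

theorem ots_le_of_monotone_bound {c : Ordinal} (hs : s.IsWF) (f : ↥s → Ordinal)
    (hmono : ∀ a b : ↥s, a < b → f a < f b) (hbd : ∀ a, f a < c) :
    orderTypeSet s hs ≤ c := by
  letI : IsWellFounded s (· < ·) := ⟨hs⟩
  have key : ∀ a : ↥s, Ordinal.typein ((· < ·) : s → s → Prop) a ≤ f a := by
    intro a
    refine IsWellFounded.induction
      (motive := fun a : ↥s => Ordinal.typein ((· < ·) : s → s → Prop) a ≤ f a)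
      ((· < ·) : ↥s → ↥s → Prop) a ?_
    intro b IHb
    by_contra hab
    push_neg at hab
    have h1 : f b < Ordinal.type ((· < ·) : s → s → Prop) :=
      hab.trans (Ordinal.typein_lt_type _ b)
    have h2 : Ordinal.typein ((· < ·) : s → s → Prop)
        (Ordinal.enum ((· < ·) : s → s → Prop) ⟨f b, h1⟩) = f b := Ordinal.typein_enum _ _
    have h3 : Ordinal.enum ((· < ·) : s → s → Prop) ⟨f b, h1⟩ < b := by
      have := hab
      rw [← h2] at this
      exact (Ordinal.typein_lt_typein ((· < ·) : s → s → Prop)).1 this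
    have h4 : Ordinal.typein ((· < ·) : s → s → Prop)
        (Ordinal.enum ((· < ·) : s → s → Prop) ⟨f b, h1⟩) ≤
        f (Ordinal.enum ((· < ·) : s → s → Prop) ⟨f b, h1⟩) := IHb _ h3
    rw [h2] at h4
    exact absurd (hmono _ _ h3) (not_lt.2 h4)
  by_contra hc
  push_neg at hc
  have hc' : c < Ordinal.type ((· < ·) : s → s → Prop) := hc
  have h5 := key (Ordinal.enum ((· < ·) : s → s → Prop) ⟨c, hc'⟩)
  rw [Ordinal.typein_enum] at h5
  exact absurd (hbd _) (not_lt.2 h5)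

theorem ots_union_le (hs : s.IsWF) (ht : t.IsWF) :
    orderTypeSet (s ∪ t) (hs.union ht) ≤ orderTypeSet s hs ♯ orderTypeSet t ht := by
  refine ots_le_of_monotone_bound (hs.union ht)
    (fun u => orderTypeSet (s ∩ Set.Iio u.1) (hs.mono Set.inter_subset_left) ♯
      orderTypeSet (t ∩ Set.Iio u.1) (ht.mono Set.inter_subset_left)) ?_ ?_
  · intro a b hab
    have hab' : a.1 < b.1 := hab
    have hIio : Set.Iio a.1 ⊆ Set.Iio b.1 := fun y hy => lt_trans hy hab'
    rcases a.2 with ha | ha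
    · refine nadd_lt_nadd_of_lt_of_le ?_
        (ots_mono _ _ (Set.inter_subset_inter_right _ hIio))
      have heq : s ∩ Set.Iio a.1 = (s ∩ Set.Iio b.1) ∩ Set.Iio a.1 := by
        ext y
        simp only [Set.mem_inter_iff, Set.mem_Iio]
        exact ⟨fun ⟨h1, h2⟩ => ⟨⟨h1, h2.trans hab'⟩, h2⟩, fun ⟨⟨h1, _⟩, h2⟩ => ⟨h1, h2⟩⟩
      rw [ots_congr heq _ ((hs.mono Set.inter_subset_left).mono Set.inter_subset_left)]
      exact ots_inter_Iio_lt (hs.mono Set.inter_subset_left) ⟨ha, hab'⟩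
    · refine nadd_lt_nadd_of_le_of_lt
        (ots_mono _ _ (Set.inter_subset_inter_right _ hIio)) ?_
      have heq : t ∩ Set.Iio a.1 = (t ∩ Set.Iio b.1) ∩ Set.Iio a.1 := by
        ext y
        simp only [Set.mem_inter_iff, Set.mem_Iio]
        exact ⟨fun ⟨h1, h2⟩ => ⟨⟨h1, h2.trans hab'⟩, h2⟩, fun ⟨⟨h1, _⟩, h2⟩ => ⟨h1, h2⟩⟩
      rw [ots_congr heq _ ((ht.mono Set.inter_subset_left).mono Set.inter_subset_left)]
      exact ots_inter_Iio_lt (ht.mono Set.inter_subset_left) ⟨ha, hab'⟩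
  · intro a
    rcases a.2 with ha | ha
    · exact nadd_lt_nadd_of_lt_of_le (ots_inter_Iio_lt hs ha)
        (ots_mono _ _ Set.inter_subset_left)
    · exact nadd_lt_nadd_of_le_of_lt (ots_mono _ _ Set.inter_subset_left)
        (ots_inter_Iio_lt ht ha)

theorem ots_split (hs : s.IsWF) (x : Γ) :
    orderTypeSet (s ∩ Set.Iio x) (hs.mono Set.inter_subset_left) +
      orderTypeSet (s ∩ Set.Ici x) (hs.mono Set.inter_subset_left) ≤ orderTypeSet s hs := by
  letI : IsWellFounded s (· < ·) := ⟨hs⟩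
  letI : IsWellFounded ↥(s ∩ Set.Iio x) (· < ·) := ⟨hs.mono Set.inter_subset_left⟩
  letI : IsWellFounded ↥(s ∩ Set.Ici x) (· < ·) := ⟨hs.mono Set.inter_subset_left⟩
  have emb : Sum.Lex ((· < ·) : ↥(s ∩ Set.Iio x) → _ → Prop)
      ((· < ·) : ↥(s ∩ Set.Ici x) → _ → Prop) ↪r ((· < ·) : ↥s → ↥s → Prop) := by
    refine RelEmbedding.ofMonotone
      (Sum.elim (fun y : ↥(s ∩ Set.Iio x) => (⟨y.1, y.2.1⟩ : ↥s))
        (fun z : ↥(s ∩ Set.Ici x) => (⟨z.1, z.2.1⟩ : ↥s))) ?_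
    rintro (y | z) (y' | z') h
    · show (⟨y.1, y.2.1⟩ : ↥s) < ⟨y'.1, y'.2.1⟩
      have h' : y < y' := Sum.lex_inl_inl.1 h
      exact Subtype.mk_lt_mk.2 h'
    · show (⟨y.1, y.2.1⟩ : ↥s) < ⟨z'.1, z'.2.1⟩
      exact Subtype.mk_lt_mk.2 (lt_of_lt_of_le y.2.2 z'.2.2)
    · cases h
    · show (⟨z.1, z.2.1⟩ : ↥s) < ⟨z'.1, z'.2.1⟩
      have h' : z < z' := Sum.lex_inr_inr.1 h
      exact Subtype.mk_lt_mk.2 h'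
  have h := RelEmbedding.ordinal_type_le emb
  rwa [Ordinal.type_sum_lex] at h

theorem ots_eq_zero_iff (hs : s.IsWF) : orderTypeSet s hs = 0 ↔ s = ∅ := by
  letI : IsWellFounded s (· < ·) := ⟨hs⟩
  rw [show orderTypeSet s hs = Ordinal.type ((· < ·) : s → s → Prop) from rfl,
    Ordinal.type_eq_zero_iff_isEmpty, Set.isEmpty_coe_sort]

end SetPart
section Main
variable {G : Type*} [AddCommMonoid G] [LinearOrder G] [IsOrderedCancelAddMonoid G]

theorem split_step (S T : Set G) (hS : S.IsWF) (hT : T.IsWF)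
    (IH : ∀ (S' T' : Set G) (hS' : S'.IsWF) (hT' : T'.IsWF),
      orderTypeSet S' hS' ♯ orderTypeSet T' hT' < orderTypeSet S hS ♯ orderTypeSet T hT →
      orderTypeSet (S' + T') ((hS'.isPWO.add hT'.isPWO).isWF) ≤
        orderTypeSet S' hS' ⨳ orderTypeSet T' hT')
    (h0 : orderTypeSet S hS ≠ 0)
    (hnp : orderTypeSet S hS ≠ ω ^ Ordinal.log ω (orderTypeSet S hS)) :
    orderTypeSet (S + T) ((hS.isPWO.add hT.isPWO).isWF) ≤
      orderTypeSet S hS ⨳ orderTypeSet T hT := by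
  set α := orderTypeSet S hS with hα
  set μ := Ordinal.log ω α with hμ
  have hne : (ω ^ μ : Ordinal) ≠ 0 := (Ordinal.opow_pos μ omega0_pos).ne'
  have hdiv : α / ω ^ μ < ω := by
    rw [Ordinal.div_lt hne, ← Ordinal.opow_succ]
    exact Ordinal.lt_opow_succ_log_self one_lt_omega0 α
  obtain ⟨n, hn⟩ := Ordinal.lt_omega0.1 hdiv
  have hρ : α % ω ^ μ < ω ^ μ := Ordinal.mod_lt _ hne
  have hmod : ω ^ μ * n + α % ω ^ μ = α := by rw [← hn]; exact Ordinal.div_add_mod α (ω ^ μ)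
  have hn1 : 1 ≤ n := by
    rcases Nat.eq_zero_or_pos n with h | h
    · exfalso
      subst h
      rw [Nat.cast_zero, mul_zero, zero_add] at hmod
      rw [hmod] at hρ
      exact absurd (Ordinal.opow_log_le_self ω h0) (not_le.2 hρ)
    · exact h
  have hα1lt : ω ^ μ < α := lt_of_le_of_ne (Ordinal.opow_log_le_self ω h0) (Ne.symm hnp)
  have hkey : ω ^ μ * (n : Ordinal) = ω ^ μ + ω ^ μ * ((n - 1 : ℕ) : Ordinal) := by
    have hc : (n : Ordinal) = 1 + ((n - 1 : ℕ) : Ordinal) := by norm_cast; omega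
    rw [hc, mul_add, mul_one]
  have hα2lt : ω ^ μ * ((n - 1 : ℕ) : Ordinal) + α % ω ^ μ < α := by
    calc ω ^ μ * ((n - 1 : ℕ) : Ordinal) + α % ω ^ μ
        < ω ^ μ * ((n - 1 : ℕ) : Ordinal) + ω ^ μ := add_lt_add_right hρ _
      _ = ω ^ μ * (((n - 1 : ℕ) : Ordinal) + 1) := by rw [mul_add, mul_one]
      _ = ω ^ μ * (n : Ordinal) := by
          congr 1
          norm_cast
          omega
      _ ≤ α := by rw [← hmod]; exact le_self_add
  obtain ⟨x, hxS, hxeq⟩ := exists_ots_inter_Iio hS hα1lt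
  have hS1 : (S ∩ Set.Iio x).IsWF := hS.mono Set.inter_subset_left
  have hS2 : (S ∩ Set.Ici x).IsWF := hS.mono Set.inter_subset_left
  have hS2le : orderTypeSet (S ∩ Set.Ici x) hS2 ≤ ω ^ μ * ((n - 1 : ℕ) : Ordinal) + α % ω ^ μ := by
    by_contra hlt
    push_neg at hlt
    have h6 := ots_split hS x
    rw [hxeq] at h6
    have h7 : α < ω ^ μ + orderTypeSet (S ∩ Set.Ici x) hS2 := by
      calc α = ω ^ μ * n + α % ω ^ μ := hmod.symm
        _ = ω ^ μ + (ω ^ μ * ((n - 1 : ℕ) : Ordinal) + α % ω ^ μ) := by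
            rw [hkey, add_assoc]
        _ < ω ^ μ + orderTypeSet (S ∩ Set.Ici x) hS2 := add_lt_add_right hlt _
    exact absurd h6 (not_le.2 h7)
  have hsetsplit : S = (S ∩ Set.Iio x) ∪ (S ∩ Set.Ici x) := by
    ext y
    simp only [Set.mem_union, Set.mem_inter_iff, Set.mem_Iio, Set.mem_Ici]
    constructor
    · intro hy
      rcases lt_or_ge y x with h | h
      · exact Or.inl ⟨hy, h⟩
      · exact Or.inr ⟨hy, h⟩
    · rintro (⟨hy, _⟩ | ⟨hy, _⟩) <;> exact hy
  have hw1 : ((S ∩ Set.Iio x) + T).IsWF := (hS1.isPWO.add hT.isPWO).isWF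
  have hw2 : ((S ∩ Set.Ici x) + T).IsWF := (hS2.isPWO.add hT.isPWO).isWF
  have hUadd : S + T = ((S ∩ Set.Iio x) + T) ∪ ((S ∩ Set.Ici x) + T) := by
    rw [← Set.union_add, ← hsetsplit]
  calc orderTypeSet (S + T) ((hS.isPWO.add hT.isPWO).isWF)
      = orderTypeSet _ (hw1.union hw2) := ots_congr hUadd _ _
    _ ≤ orderTypeSet _ hw1 ♯ orderTypeSet _ hw2 := ots_union_le hw1 hw2
    _ ≤ (ω ^ μ) ⨳ orderTypeSet T hT ♯
        (ω ^ μ * ((n - 1 : ℕ) : Ordinal) + α % ω ^ μ) ⨳ orderTypeSet T hT := by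
      refine nadd_le_nadd ?_ ?_
      · have h8 := IH (S ∩ Set.Iio x) T hS1 hT
          (by rw [hxeq]; exact nadd_lt_nadd_right hα1lt _)
        rwa [hxeq] at h8
      · have h8 := IH (S ∩ Set.Ici x) T hS2 hT
          (lt_of_le_of_lt (nadd_le_nadd_right hS2le _) (nadd_lt_nadd_right hα2lt _))
        exact h8.trans (nmul_le_nmul_right hS2le _)
    _ = (ω ^ μ ♯ (ω ^ μ * ((n - 1 : ℕ) : Ordinal) + α % ω ^ μ)) ⨳ orderTypeSet T hT :=
        (nadd_nmul _ _ _).symm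
    _ = α ⨳ orderTypeSet T hT := by rw [opow_nadd_rest n hn1 hρ, hmod]

theorem carruth_main : ∀ (o : Ordinal) (S T : Set G) (hS : S.IsWF) (hT : T.IsWF),
    orderTypeSet S hS ♯ orderTypeSet T hT ≤ o →
    orderTypeSet (S + T) ((hS.isPWO.add hT.isPWO).isWF) ≤
      orderTypeSet S hS ⨳ orderTypeSet T hT := by
  intro o
  induction o using Ordinal.induction with
  | _ o IHo =>
  intro S T hS hT ho
  have IH : ∀ (S' T' : Set G) (hS' : S'.IsWF) (hT' : T'.IsWF),
      orderTypeSet S' hS' ♯ orderTypeSet T' hT' < orderTypeSet S hS ♯ orderTypeSet T hT →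
      orderTypeSet (S' + T') ((hS'.isPWO.add hT'.isPWO).isWF) ≤
        orderTypeSet S' hS' ⨳ orderTypeSet T' hT' :=
    fun S' T' hS' hT' h => IHo _ (h.trans_le ho) S' T' hS' hT' le_rfl
  by_cases h0S : orderTypeSet S hS = 0
  · have hSe : S = ∅ := (ots_eq_zero_iff hS).1 h0S
    have hempty : S + T = ∅ := by rw [hSe, Set.empty_add]
    rw [ots_congr hempty ((hS.isPWO.add hT.isPWO).isWF) Set.isWF_empty,
      (ots_eq_zero_iff _).2 rfl]
    exact zero_le
  by_cases h0T : orderTypeSet T hT = 0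
  · have hTe : T = ∅ := (ots_eq_zero_iff hT).1 h0T
    have hempty : S + T = ∅ := by rw [hTe, Set.add_empty]
    rw [ots_congr hempty ((hS.isPWO.add hT.isPWO).isWF) Set.isWF_empty,
      (ots_eq_zero_iff _).2 rfl]
    exact zero_le
  by_cases hSp : orderTypeSet S hS = ω ^ Ordinal.log ω (orderTypeSet S hS)
  · by_cases hTp : orderTypeSet T hT = ω ^ Ordinal.log ω (orderTypeSet T hT)
    · -- principal case
      refine ots_le_of_forall_lt ((hS.isPWO.add hT.isPWO).isWF) ?_
      intro z hz
      obtain ⟨a, haS, b, hbT, rfl⟩ := Set.mem_add.1 hz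
      have hSa : (S ∩ Set.Iio a).IsWF := hS.mono Set.inter_subset_left
      have hTb : (T ∩ Set.Iio b).IsWF := hT.mono Set.inter_subset_left
      have hsub : (S + T) ∩ Set.Iio (a + b) ⊆ ((S ∩ Set.Iio a) + T) ∪ (S + (T ∩ Set.Iio b)) := by
        rintro y ⟨hy, hylt⟩
        obtain ⟨u, huS, v, hvT, rfl⟩ := Set.mem_add.1 hy
        by_cases hua : u < a
        · exact Or.inl (Set.add_mem_add ⟨huS, hua⟩ hvT)
        · push_neg at hua
          have hv : v < b := by
            have h10 : a + v ≤ u + v := add_le_add_left hua v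
            exact lt_of_add_lt_add_left (h10.trans_lt hylt)
          exact Or.inr (Set.add_mem_add huS ⟨hvT, hv⟩)
      have hw1 : ((S ∩ Set.Iio a) + T).IsWF := (hSa.isPWO.add hT.isPWO).isWF
      have hw2 : (S + (T ∩ Set.Iio b)).IsWF := (hS.isPWO.add hTb.isPWO).isWF
      have hb1 : orderTypeSet (S ∩ Set.Iio a) hSa < orderTypeSet S hS := ots_inter_Iio_lt hS haS
      have hb2 : orderTypeSet (T ∩ Set.Iio b) hTb < orderTypeSet T hT := ots_inter_Iio_lt hT hbT
      calc orderTypeSet ((S + T) ∩ Set.Iio (a + b))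
            (((hS.isPWO.add hT.isPWO).isWF).mono Set.inter_subset_left)
          ≤ orderTypeSet _ (hw1.union hw2) := ots_mono _ _ hsub
        _ ≤ orderTypeSet _ hw1 ♯ orderTypeSet _ hw2 := ots_union_le hw1 hw2
        _ ≤ orderTypeSet (S ∩ Set.Iio a) hSa ⨳ orderTypeSet T hT ♯
            orderTypeSet S hS ⨳ orderTypeSet (T ∩ Set.Iio b) hTb :=
          nadd_le_nadd (IH _ _ hSa hT (nadd_lt_nadd_right hb1 _))
            (IH _ _ hS hTb (nadd_lt_nadd_left hb2 _))
        _ < ω ^ (Ordinal.log ω (orderTypeSet S hS) ♯ Ordinal.log ω (orderTypeSet T hT)) := by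
            rw [hSp] at hb1
            rw [hTp] at hb2
            have h11 := nadd_nmul_lt_opow hb1 hb2
            rw [← hSp, ← hTp] at h11
            exact h11
        _ = orderTypeSet S hS ⨳ orderTypeSet T hT := by
            rw [← omega0_opow_nmul, ← hSp, ← hTp]
    · have h9 := split_step T S hT hS
        (fun S' T' hS' hT' h => IH S' T' hS' hT'
          (by rwa [nadd_comm (orderTypeSet T hT)] at h)) h0T hTp
      have h12 := ots_congr (add_comm S T) ((hS.isPWO.add hT.isPWO).isWF)
        ((hT.isPWO.add hS.isPWO).isWF)
      rw [h12, nmul_comm]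
      exact h9
  · exact split_step S T hS hT IH h0S hSp

end Main
end CarruthAux

/-- For a linearly ordered abelian group `G` and all `b, c ∈ K((G))`:
`ot (b + c) ≤ ot b ♯ ot c` and `ot (b * c) ≤ ot b ⨳ ot c`,
where `♯` is the Hessenberg natural sum and `⨳` the Hessenberg natural product. -/
theorem ot_add_le_and_ot_mul_le {G : Type*} [AddCommGroup G] [LinearOrder G] [IsOrderedAddMonoid G]
    {K : Type*} [Field K] (b c : HahnSeries G K) :
    (b + c).ot ≤ b.ot ♯ c.ot ∧ (b * c).ot ≤ b.ot ⨳ c.ot := by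
  constructor
  · exact (CarruthAux.ots_mono (b + c).isWF_support
      (b.isWF_support.union c.isWF_support) (HahnSeries.support_add_subset b c)).trans
      (CarruthAux.ots_union_le _ _)
  · exact (CarruthAux.ots_mono (b * c).isWF_support
      ((b.isWF_support.isPWO.add c.isWF_support.isPWO).isWF)
      HahnSeries.support_mul_subset).trans
      (CarruthAux.carruth_main _ b.support c.support _ _ le_rfl)
end

section
/- Let G be a linearly ordered abelian group. Every nonzero series b in K((G)) has a unique weak normal form: there exist unique n ≥ 1 and unique series b₁, …, bₙ ∈ K((G)) such that each bᵢ is weakly principal, ot(b₁) ≥ ot(b₂) ≥ … ≥ ot(bₙ), every element of supp(bᵢ) is strictly less than every element of supp(b_{i+1}) for i = 1, …, n−1, and b = b₁ + … + bₙ. -/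
open Ordinal

/-- A nonzero series is weakly principal if its order type is `ω ^ α` for some ordinal `α`. -/
def weaklyPrincipal {Γ : Type*} [LinearOrder Γ] {R : Type*} [Zero R]
    (b : HahnSeries Γ R) : Prop :=
  ∃ α : Ordinal, b.ot = Ordinal.omega0 ^ α

/-! ### Auxiliary results on order types of well-ordered sets -/

section OTS

variable {Γ : Type*} [LinearOrder Γ]

theorem ots_le_of_subset {s t : Set Γ} (hs : s.IsWF) (ht : t.IsWF) (h : s ⊆ t) :
    orderTypeSet s hs ≤ orderTypeSet t ht := by
  letI : IsWellFounded s (· < ·) := ⟨hs⟩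
  letI : IsWellFounded t (· < ·) := ⟨ht⟩
  rw [show orderTypeSet s hs = Ordinal.type ((· < ·) : s → s → Prop) from rfl,
    show orderTypeSet t ht = Ordinal.type ((· < ·) : t → t → Prop) from rfl,
    Ordinal.type_le_iff']
  exact ⟨⟨⟨Set.inclusion h, Set.inclusion_injective h⟩, Iff.rfl⟩⟩

theorem ots_eq_zero_iff {s : Set Γ} (hs : s.IsWF) : orderTypeSet s hs = 0 ↔ s = ∅ := by
  letI : IsWellFounded s (· < ·) := ⟨hs⟩
  rw [show orderTypeSet s hs = Ordinal.type ((· < ·) : s → s → Prop) from rfl,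
    Ordinal.type_eq_zero_iff_isEmpty, Set.isEmpty_coe_sort]

theorem ots_congr {s t : Set Γ} (h : s = t) (hs : s.IsWF) (ht : t.IsWF) :
    orderTypeSet s hs = orderTypeSet t ht := by subst h; rfl

theorem ots_union {s t : Set Γ} (hs : s.IsWF) (ht : t.IsWF)
    (hsep : ∀ x ∈ s, ∀ y ∈ t, x < y) :
    orderTypeSet (s ∪ t) (hs.union ht) = orderTypeSet s hs + orderTypeSet t ht := by
  classical
  letI : IsWellFounded s (· < ·) := ⟨hs⟩
  letI : IsWellFounded t (· < ·) := ⟨ht⟩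
  letI : IsWellFounded (↥(s ∪ t)) (· < ·) := ⟨hs.union ht⟩
  have hdisj : Disjoint s t := Set.disjoint_left.2 fun {x} hx hx' => lt_irrefl x (hsep x hx x hx')
  rw [show orderTypeSet (s ∪ t) (hs.union ht)
      = Ordinal.type ((· < ·) : ↥(s ∪ t) → ↥(s ∪ t) → Prop) from rfl,
    show orderTypeSet s hs = Ordinal.type ((· < ·) : s → s → Prop) from rfl,
    show orderTypeSet t ht = Ordinal.type ((· < ·) : t → t → Prop) from rfl,
    ← Ordinal.type_sum_lex]
  refine Eq.symm (RelIso.ordinal_type_eq ?_).symm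
  refine RelIso.mk (Equiv.Set.union hdisj) ?_
  rintro ⟨a, ha⟩ ⟨b, hb⟩
  rcases ha.imp id id with ha' | ha' <;> rcases hb.imp id id with hb' | hb'
  · rw [Equiv.Set.union_apply_left hdisj ha', Equiv.Set.union_apply_left hdisj hb']
    simp [Subtype.mk_lt_mk]
  · rw [Equiv.Set.union_apply_left hdisj ha', Equiv.Set.union_apply_right hdisj hb']
    simpa using (hsep a ha' b hb')
  · rw [Equiv.Set.union_apply_right hdisj ha', Equiv.Set.union_apply_left hdisj hb']
    simpa using (hsep b hb' a ha').le
  · rw [Equiv.Set.union_apply_right hdisj ha', Equiv.Set.union_apply_right hdisj hb']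
    simp [Subtype.mk_lt_mk]

theorem ots_sep {s : Set Γ} (hs : Set.IsWF s) {g : Γ} (hg : g ∈ s) :
    letI : IsWellFounded s (· < ·) := ⟨hs⟩
    orderTypeSet {x ∈ s | x < g} (hs.mono (Set.sep_subset _ _)) =
      typein ((· < ·) : s → s → Prop) ⟨g, hg⟩ := by
  letI : IsWellFounded s (· < ·) := ⟨hs⟩
  letI : IsWellFounded ↥{x ∈ s | x < g} (· < ·) := ⟨hs.mono (Set.sep_subset _ _)⟩
  show Ordinal.type ((· < ·) : ↥{x ∈ s | x < g} → ↥{x ∈ s | x < g} → Prop) = _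
  rw [← Ordinal.type_subrel]
  refine Eq.symm (RelIso.ordinal_type_eq ?_).symm
  exact RelIso.mk (Equiv.Set.sep s (· < g)) Iff.rfl

theorem ots_sep_lt {s : Set Γ} (hs : Set.IsWF s) {g : Γ} (hg : g ∈ s) :
    orderTypeSet {x ∈ s | x < g} (hs.mono (Set.sep_subset _ _)) < orderTypeSet s hs := by
  letI : IsWellFounded s (· < ·) := ⟨hs⟩
  rw [ots_sep hs hg]
  exact typein_lt_type _ _

theorem exists_sep_ots {s : Set Γ} (hs : Set.IsWF s) {c : Ordinal}
    (hc : c < orderTypeSet s hs) :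
    ∃ g ∈ s, orderTypeSet {x ∈ s | x < g} (hs.mono (Set.sep_subset _ _)) = c := by
  letI : IsWellFounded s (· < ·) := ⟨hs⟩
  obtain ⟨a, ha⟩ := typein_surj ((· < ·) : s → s → Prop) hc
  exact ⟨a.1, a.2, by rw [ots_sep hs a.2]; exact ha⟩

/-- `u` is an initial segment of `s`. -/
def SetPrefix (u s : Set Γ) : Prop := u ⊆ s ∧ ∀ x ∈ u, ∀ y ∈ s, y ∉ u → x < y

theorem ots_lt_of_prefix_ssubset {u s : Set Γ} (hs : s.IsWF) (hu : SetPrefix u s)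
    {x : Γ} (hx : x ∈ s) (hxu : x ∉ u) :
    orderTypeSet u (hs.mono hu.1) < orderTypeSet s hs := by
  have h1 : u ⊆ {z ∈ s | z < x} := fun z hz => ⟨hu.1 hz, hu.2 z hz x hx hxu⟩
  exact lt_of_le_of_lt (ots_le_of_subset _ (hs.mono (Set.sep_subset _ _)) h1) (ots_sep_lt hs hx)

theorem prefix_unique {u v s : Set Γ} (hs : s.IsWF) (hu : SetPrefix u s) (hv : SetPrefix v s)
    (h : orderTypeSet u (hs.mono hu.1) = orderTypeSet v (hs.mono hv.1)) : u = v := by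
  by_contra hne
  have key : ∀ (u v : Set Γ) (hu : SetPrefix u s) (hv : SetPrefix v s),
      orderTypeSet u (hs.mono hu.1) = orderTypeSet v (hs.mono hv.1) → ∀ x ∈ u, x ∈ v := by
    intro u v hu hv h x hx
    by_contra hxv
    have hvu : SetPrefix v u := by
      constructor
      · intro z hz
        by_contra hzu
        exact absurd (hv.2 z hz x (hu.1 hx) hxv) (hu.2 x hx z (hv.1 hz) hzu).asymm
      · intro a ha y hy hyv
        exact hv.2 a ha y (hu.1 hy) hyv
    exact absurd h (ots_lt_of_prefix_ssubset (hs.mono hu.1) hvu hx hxv).ne'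
  exact hne (Set.Subset.antisymm (fun x hx => key u v hu hv h x hx)
    (fun x hx => key v u hv hu h.symm x hx))

end OTS

/-! ### Auxiliary ordinal arithmetic -/

section OrdArith

theorem absorb_false {e γ : Ordinal} (h : omega0 ^ e + γ = γ) (hlt : γ < omega0 ^ (e + 1)) :
    False := by
  have hn : ∀ n : ℕ, omega0 ^ e * n + γ = γ := by
    intro n
    induction n with
    | zero => simp
    | succ n ih =>
      push_cast
      rw [mul_add, mul_one, add_assoc, h, ih]
  have hle : omega0 ^ e * omega0 ≤ γ := by
    rw [mul_le_iff_of_isSuccLimit isSuccLimit_omega0]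
    intro c hc
    obtain ⟨n, rfl⟩ := lt_omega0.1 hc
    exact (hn n) ▸ le_self_add
  rw [← opow_succ, ← add_one_eq_succ] at hle
  exact hle.not_gt hlt

theorem log_det {α γ : Ordinal} (h1 : omega0 ^ α ≤ γ) (h2 : γ < omega0 ^ (α + 1)) :
    log omega0 γ = α := by
  have hγ : γ ≠ 0 := fun h => by simp [h, nonpos_iff_eq_zero, opow_ne_zero α omega0_ne_zero] at h1
  refine le_antisymm ?_ ((opow_le_iff_le_log one_lt_omega0 hγ).1 h1)
  have h3 := (opow_le_iff_le_log one_lt_omega0 hγ).not.1 h2.not_ge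
  rw [add_one_eq_succ, Order.succ_le_iff, not_lt] at h3
  exact h3

theorem sub_log_lt {γ : Ordinal} (hγ : γ ≠ 0) (hne : γ ≠ omega0 ^ log omega0 γ) :
    γ - omega0 ^ log omega0 γ < γ := by
  rcases lt_or_ge (γ - omega0 ^ log omega0 γ) γ with h | h
  · exact h
  exfalso
  have hle : omega0 ^ log omega0 γ ≤ γ := opow_log_le_self _ hγ
  have heq : γ - omega0 ^ log omega0 γ = γ := le_antisymm (sub_le_self _ _) h
  have hh : omega0 ^ log omega0 γ + γ = γ := by
    conv_rhs => rw [← Ordinal.add_sub_cancel_of_le hle, heq]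
  exact absorb_false hh
    (by rw [add_one_eq_succ]; exact lt_opow_succ_log_self one_lt_omega0 γ)

theorem ord_list_sum_le {μ : Ordinal} : ∀ {l : List Ordinal}, (∀ o ∈ l, o ≤ μ) →
    l.sum ≤ μ * l.length := by
  intro l
  induction l with
  | nil => simp
  | cons a T ih =>
    intro h
    rw [List.sum_cons, List.length_cons, Nat.add_comm T.length 1, Nat.cast_add, Nat.cast_one,
      mul_add, mul_one]
    exact add_le_add (h a (List.mem_cons_self))
      (ih fun o ho => h o (List.mem_cons_of_mem _ ho))

end OrdArith

/-! ### Hahn series decompositions -/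

section Hahn

variable {Γ : Type*} [LinearOrder Γ] {K : Type*} [AddCommGroup K]

open HahnSeries

/-- Restriction of a Hahn series to a set of exponents. -/
noncomputable def hres (b : HahnSeries Γ K) (s : Set Γ) : HahnSeries Γ K where
  coeff := s.indicator b.coeff
  isPWO_support' := b.isPWO_support.mono (by
    intro x hx
    simp only [Function.mem_support] at hx
    classical
    by_cases h : x ∈ s
    · rw [Set.indicator_of_mem h] at hx; exact hx
    · rw [Set.indicator_of_notMem h] at hx; exact absurd rfl hx)

theorem hres_coeff (b : HahnSeries Γ K) (s : Set Γ) (x : Γ) :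
    (hres b s).coeff x = s.indicator b.coeff x := rfl

theorem hres_support (b : HahnSeries Γ K) (s : Set Γ) :
    (hres b s).support = b.support ∩ s := by
  ext x
  classical
  by_cases h : x ∈ s <;>
    simp [HahnSeries.mem_support, hres_coeff, Set.indicator_apply, h]

/-- Separation of supports. -/
def HSep (a c : HahnSeries Γ K) : Prop := ∀ x ∈ a.support, ∀ y ∈ c.support, x < y

/-- The relation demanded between successive blocks of a weak normal form. -/
def HRel (a c : HahnSeries Γ K) : Prop := c.ot ≤ a.ot ∧ HSep a c

/-- `L` is a weak-normal-form decomposition of `b`. -/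
def HDec (L : List (HahnSeries Γ K)) (b : HahnSeries Γ K) : Prop :=
  (∀ c ∈ L, weaklyPrincipal c) ∧ L.Pairwise HRel ∧ L.sum = b

theorem ot_zero : (0 : HahnSeries Γ K).ot = 0 := by
  rw [HahnSeries.ot, ots_eq_zero_iff]
  exact HahnSeries.support_zero

theorem ot_eq_zero_iff {b : HahnSeries Γ K} : b.ot = 0 ↔ b = 0 := by
  rw [HahnSeries.ot, ots_eq_zero_iff, HahnSeries.support_eq_empty_iff]

theorem hsep_disjoint {a c : HahnSeries Γ K} (h : HSep a c) :
    Disjoint a.support c.support :=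
  Set.disjoint_left.2 fun {x} hx hx' => lt_irrefl x (h x hx x hx')

theorem support_add_of_hsep {a c : HahnSeries Γ K} (h : HSep a c) :
    (a + c).support = a.support ∪ c.support := by
  ext x
  constructor
  · intro hx
    by_contra hmem
    simp only [Set.mem_union, not_or] at hmem
    simp only [HahnSeries.mem_support, not_not] at hmem
    simp only [HahnSeries.mem_support, HahnSeries.coeff_add, hmem.1, hmem.2, add_zero,
      ne_eq, not_true_eq_false] at hx
  · intro hx
    rcases hx with hx | hx
    · have hc : c.coeff x = 0 := by
        by_contra hc
        exact lt_irrefl x (h x hx x hc)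
      simp only [HahnSeries.mem_support, HahnSeries.coeff_add, hc, add_zero]
      exact hx
    · have ha : a.coeff x = 0 := by
        by_contra ha
        exact lt_irrefl x (h x ha x hx)
      simp only [HahnSeries.mem_support, HahnSeries.coeff_add, ha, zero_add]
      exact hx

theorem ot_add_of_hsep {a c : HahnSeries Γ K} (h : HSep a c) :
    (a + c).ot = a.ot + c.ot := by
  rw [HahnSeries.ot, HahnSeries.ot, HahnSeries.ot,
    ots_congr (support_add_of_hsep h) (a + c).isWF_support
      (a.isWF_support.union c.isWF_support)]
  exact ots_union a.isWF_support c.isWF_support h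

theorem sum_support_iff : ∀ {L : List (HahnSeries Γ K)}, L.Pairwise HSep →
    ∀ x, x ∈ L.sum.support ↔ ∃ c ∈ L, x ∈ c.support := by
  intro L
  induction L with
  | nil => intro _ x; simp [HahnSeries.support_zero]
  | cons a T ih =>
    intro hp x
    rw [List.pairwise_cons] at hp
    have hsep : HSep a T.sum := by
      intro z hz y hy
      rw [ih hp.2 y] at hy
      obtain ⟨c, hc, hy⟩ := hy
      exact hp.1 c hc z hz y hy
    rw [List.sum_cons, support_add_of_hsep hsep, Set.mem_union, ih hp.2 x]
    simp

theorem hsep_sum {a : HahnSeries Γ K} {L : List (HahnSeries Γ K)}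
    (h : ∀ c ∈ L, HSep a c) (hL : L.Pairwise HSep) : HSep a L.sum := by
  intro x hx y hy
  rw [sum_support_iff hL y] at hy
  obtain ⟨c, hc, hy⟩ := hy
  exact h c hc x hx y hy

theorem ot_sum : ∀ {L : List (HahnSeries Γ K)}, L.Pairwise HSep →
    L.sum.ot = (L.map HahnSeries.ot).sum := by
  intro L
  induction L with
  | nil => simp [ot_zero]
  | cons a T ih =>
    intro hp
    rw [List.pairwise_cons] at hp
    rw [List.sum_cons, ot_add_of_hsep (hsep_sum hp.1 hp.2), List.map_cons, List.sum_cons,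
      ih hp.2]

theorem hdec_pairwise_hsep {L : List (HahnSeries Γ K)} {b : HahnSeries Γ K}
    (h : HDec L b) : L.Pairwise HSep :=
  h.2.1.imp (fun hr => hr.2)

theorem hdec_head_ot {a : HahnSeries Γ K} {L : List (HahnSeries Γ K)} {b : HahnSeries Γ K}
    (h : HDec (a :: L) b) : a.ot = omega0 ^ log omega0 b.ot := by
  obtain ⟨hwp, hpw, hsum⟩ := h
  obtain ⟨α, hα⟩ := hwp a (List.mem_cons_self)
  rw [List.pairwise_cons] at hpw
  have hsep : (a :: L).Pairwise HSep := List.pairwise_cons.2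
    ⟨fun c hc => (hpw.1 c hc).2, hpw.2.imp (fun hr => hr.2)⟩
  have hot : b.ot = a.ot + (L.map HahnSeries.ot).sum := by
    rw [← hsum, ot_sum hsep, List.map_cons, List.sum_cons]
  have hbd : (L.map HahnSeries.ot).sum ≤ a.ot * L.length := by
    refine le_trans (ord_list_sum_le ?_) (by rw [List.length_map])
    intro o ho
    rw [List.mem_map] at ho
    obtain ⟨c, hc, rfl⟩ := ho
    exact (hpw.1 c hc).1
  have h1 : omega0 ^ α ≤ b.ot := by rw [hot, hα]; exact le_self_add
  have h2 : b.ot < omega0 ^ (α + 1) := by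
    calc b.ot ≤ omega0 ^ α + omega0 ^ α * L.length := by
          rw [hot, hα]; exact add_le_add_right (hα ▸ hbd) _
      _ = omega0 ^ α * (1 + L.length) := by rw [mul_add, mul_one]
      _ < omega0 ^ α * omega0 := by
          rw [mul_lt_mul_iff_right₀ (opow_pos α omega0_pos)]
          exact_mod_cast nat_lt_omega0 (1 + L.length)
      _ = omega0 ^ (α + 1) := by rw [add_one_eq_succ, opow_succ]
  rw [hα, log_det h1 h2]

theorem hdec_bound {L : List (HahnSeries Γ K)} {c : HahnSeries Γ K}
    (h : HDec L c) : ∀ x ∈ L, x.ot ≤ omega0 ^ log omega0 c.ot := by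
  cases L with
  | nil => intro x hx; exact absurd hx List.not_mem_nil
  | cons a T =>
    intro x hx
    have hhead := hdec_head_ot h
    rcases List.mem_cons.1 hx with rfl | hx
    · exact hhead.le
    · have := (List.pairwise_cons.1 h.2.1).1 x hx
      exact hhead ▸ this.1

theorem hdec_ne_zero {a : HahnSeries Γ K} {L : List (HahnSeries Γ K)} {b : HahnSeries Γ K}
    (h : HDec (a :: L) b) : b ≠ 0 := by
  intro hb0
  obtain ⟨α, hα⟩ := h.1 a (List.mem_cons_self)
  have := hdec_head_ot h
  rw [hb0, ot_zero, Ordinal.log_zero_right, opow_zero] at this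
  have h1 : a.ot ≤ b.ot := by
    have hsep : (a :: L).Pairwise HSep := hdec_pairwise_hsep h
    have : b.ot = a.ot + (L.map HahnSeries.ot).sum := by
      rw [← h.2.2, ot_sum hsep, List.map_cons, List.sum_cons]
    rw [this]; exact le_self_add
  rw [hb0, ot_zero, nonpos_iff_eq_zero, this] at h1
  exact one_ne_zero h1

theorem hdec_head_coeff {a : HahnSeries Γ K} {L : List (HahnSeries Γ K)} {b : HahnSeries Γ K}
    (h : HDec (a :: L) b) :
    SetPrefix a.support b.support ∧ ∀ x ∈ a.support, b.coeff x = a.coeff x := by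
  obtain ⟨hwp, hpw, hsum⟩ := h
  rw [List.pairwise_cons] at hpw
  have hT : L.Pairwise HSep := hpw.2.imp (fun hr => hr.2)
  have hsep : HSep a L.sum := hsep_sum (fun c hc => (hpw.1 c hc).2) hT
  have hsupp : b.support = a.support ∪ L.sum.support := by
    rw [← hsum, List.sum_cons]
    exact support_add_of_hsep hsep
  have hcoeff : ∀ x ∈ a.support, b.coeff x = a.coeff x := by
    intro x hx
    have hLx : L.sum.coeff x = 0 := by
      by_contra hc
      exact lt_irrefl x (hsep x hx x hc)
    rw [← hsum, List.sum_cons, HahnSeries.coeff_add, hLx, add_zero]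
  refine ⟨⟨?_, ?_⟩, hcoeff⟩
  · intro x hx
    rw [HahnSeries.mem_support, hcoeff x hx]
    exact hx
  · intro x hx y hy hya
    rw [hsupp, Set.mem_union] at hy
    rcases hy with hy | hy
    · exact absurd hy hya
    · exact hsep x hx y hy

theorem eq_hres_of_coeff {a b : HahnSeries Γ K}
    (h : ∀ x ∈ a.support, b.coeff x = a.coeff x) : a = hres b a.support := by
  ext x
  classical
  rw [hres_coeff]
  by_cases hx : x ∈ a.support
  · rw [Set.indicator_of_mem hx, h x hx]
  · rw [Set.indicator_of_notMem hx]
    simpa [HahnSeries.mem_support, not_not] using hx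

theorem hdec_unique : ∀ (L L' : List (HahnSeries Γ K)) (b : HahnSeries Γ K),
    HDec L b → HDec L' b → L = L' := by
  intro L
  induction L with
  | nil =>
    intro L' b h h'
    have hb0 : b = 0 := by rw [← h.2.2]; simp
    cases L' with
    | nil => rfl
    | cons a' M' => exact absurd hb0 (hdec_ne_zero h')
  | cons a M ih =>
    intro L' b h h'
    have hb0 : b ≠ 0 := hdec_ne_zero h
    cases L' with
    | nil =>
      exfalso
      apply hb0
      rw [← h'.2.2]; simp
    | cons a' M' =>
      -- the heads agree
      have hosa : a.ot = a'.ot := by rw [hdec_head_ot h, hdec_head_ot h']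
      obtain ⟨hpre, hco⟩ := hdec_head_coeff h
      obtain ⟨hpre', hco'⟩ := hdec_head_coeff h'
      have hsupp : a.support = a'.support := by
        refine prefix_unique b.isWF_support hpre hpre' ?_
        show orderTypeSet a.support _ = orderTypeSet a'.support _
        rw [ots_congr rfl (b.isWF_support.mono hpre.1) a.isWF_support,
          ots_congr rfl (b.isWF_support.mono hpre'.1) a'.isWF_support]
        exact hosa
      have haa : a = a' := by
        rw [eq_hres_of_coeff hco, eq_hres_of_coeff hco', hsupp]
      subst haa
      -- tails decompose b - a
      have hM : HDec M (b - a) := by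
        refine ⟨fun c hc => h.1 c (List.mem_cons_of_mem _ hc),
          (List.pairwise_cons.1 h.2.1).2, ?_⟩
        have := h.2.2
        rw [List.sum_cons] at this
        rw [eq_sub_iff_add_eq, add_comm]
        exact this
      have hM' : HDec M' (b - a) := by
        refine ⟨fun c hc => h'.1 c (List.mem_cons_of_mem _ hc),
          (List.pairwise_cons.1 h'.2.1).2, ?_⟩
        have := h'.2.2
        rw [List.sum_cons] at this
        rw [eq_sub_iff_add_eq, add_comm]
        exact this
      rw [ih M' (b - a) hM hM']

theorem hdec_exists : ∀ (γ : Ordinal) (b : HahnSeries Γ K), b ≠ 0 → b.ot = γ →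
    ∃ L, HDec L b ∧ L ≠ [] := by
  intro γ
  induction γ using Ordinal.induction with
  | h γ IH =>
    intro b hb hot
    have hγ0 : γ ≠ 0 := by
      rw [← hot, ot_eq_zero_iff.ne]
      exact hb
    by_cases h1 : γ = omega0 ^ log omega0 γ
    · exact ⟨[b], ⟨by
        intro c hc
        rw [List.mem_singleton] at hc
        subst hc
        exact ⟨log omega0 γ, by rw [hot]; exact h1⟩,
        List.pairwise_singleton _ _, List.sum_singleton⟩, List.cons_ne_nil _ _⟩
    · set e := log omega0 γ with he
      have hlt : omega0 ^ e < γ := lt_of_le_of_ne (opow_log_le_self _ hγ0) (Ne.symm h1)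
      have hlt' : omega0 ^ e < orderTypeSet b.support b.isWF_support := by
        rw [show orderTypeSet b.support b.isWF_support = b.ot from rfl, hot]; exact hlt
      obtain ⟨g, hg, hgots⟩ := exists_sep_ots b.isWF_support hlt'
      set a := hres b (Set.Iio g) with ha
      set c := hres b (Set.Ici g) with hc
      have hsuppa : a.support = {x ∈ b.support | x < g} := by
        rw [ha, hres_support]
        ext x
        simp [Set.mem_sep_iff, and_comm]
      have hsuppc : c.support = b.support ∩ Set.Ici g := by rw [hc, hres_support]
      have hsum : a + c = b := by
        ext x
        classical
        rw [HahnSeries.coeff_add, ha, hc, hres_coeff, hres_coeff]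
        rcases lt_or_ge x g with hx | hx
        · rw [Set.indicator_of_mem (show x ∈ Set.Iio g from hx),
            Set.indicator_of_notMem (show x ∉ Set.Ici g from by simpa using hx.not_ge), add_zero]
        · rw [Set.indicator_of_notMem (show x ∉ Set.Iio g from by simpa using hx.not_gt),
            Set.indicator_of_mem (show x ∈ Set.Ici g from hx), zero_add]
      have hsep : HSep a c := by
        intro x hx y hy
        rw [hsuppa] at hx
        rw [hsuppc] at hy
        exact lt_of_lt_of_le hx.2 hy.2
      have hota : a.ot = omega0 ^ e := by
        rw [HahnSeries.ot, ots_congr hsuppa a.isWF_support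
          (b.isWF_support.mono (Set.sep_subset _ _)), hgots]
      have hc0 : c ≠ 0 := by
        intro h0
        have : g ∈ c.support := by
          rw [hsuppc]
          exact ⟨hg, le_refl g⟩
        rw [h0, HahnSeries.support_zero] at this
        exact this
      have hotbc : γ = omega0 ^ e + c.ot := by
        rw [← hot, ← hsum, ot_add_of_hsep hsep, hota]
      have hotc : c.ot = γ - omega0 ^ e := by
        have := Ordinal.add_sub_cancel_of_le (le_of_lt hlt)
        rw [← add_right_inj (omega0 ^ e), ← hotbc, this]
      have hclt : c.ot < γ := by
        rw [hotc, he]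
        exact sub_log_lt hγ0 h1
      obtain ⟨L', hL', hne'⟩ := IH c.ot hclt c hc0 rfl
      refine ⟨a :: L', ⟨?_, ?_, ?_⟩, List.cons_ne_nil _ _⟩
      · intro x hx
        rcases List.mem_cons.1 hx with rfl | hx
        · exact ⟨e, hota⟩
        · exact hL'.1 x hx
      · rw [List.pairwise_cons]
        refine ⟨?_, hL'.2.1⟩
        intro x hx
        have hsx : x.support ⊆ c.support := by
          intro y hy
          rw [← hL'.2.2]
          rw [sum_support_iff (hdec_pairwise_hsep hL') y]
          exact ⟨x, hx, hy⟩
        constructor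
        · calc x.ot ≤ omega0 ^ log omega0 c.ot := hdec_bound hL' x hx
            _ ≤ omega0 ^ e := by
              apply opow_le_opow_right omega0_pos
              rw [he, ← hot]
              apply Ordinal.log_mono_right
              rw [hot, hotbc]
              exact le_add_self
            _ = a.ot := hota.symm
        · intro z hz y hy
          exact hsep z hz y (hsx hy)
      · rw [List.sum_cons, hL'.2.2, hsum]

end Hahn

/-- Every nonzero `b ∈ K((G))` has a unique weak normal form: unique `n ≥ 1` and
`b₁, …, bₙ` with each `bᵢ` weakly principal, `ot b₁ ≥ … ≥ ot bₙ`, each element of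
`supp bᵢ` strictly below each element of `supp b_{i+1}`, and `b = b₁ + … + bₙ`. -/
theorem weak_normal_form {G : Type*} [AddCommGroup G] [LinearOrder G] [IsOrderedAddMonoid G] {K : Type*} [Field K]
    (b : HahnSeries G K) (hb : b ≠ 0) :
    ∃! nf : Σ n : ℕ, Fin n → HahnSeries G K,
      1 ≤ nf.1 ∧
      (∀ i, weaklyPrincipal (nf.2 i)) ∧
      (∀ i j : Fin nf.1, i ≤ j → (nf.2 j).ot ≤ (nf.2 i).ot) ∧
      (∀ i j : Fin nf.1, i < j →
        ∀ x ∈ (nf.2 i).support, ∀ y ∈ (nf.2 j).support, x < y) ∧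
      ∑ i, nf.2 i = b := by
  obtain ⟨L, hL, hne⟩ := hdec_exists b.ot b hb rfl
  refine ⟨⟨L.length, L.get⟩, ⟨?_, ?_, ?_, ?_, ?_⟩, ?_⟩
  · exact List.length_pos_iff.2 hne
  · exact fun i => hL.1 _ (List.get_mem L i)
  · intro i j hij
    rcases eq_or_lt_of_le hij with rfl | hij
    · exact le_refl _
    · exact (List.pairwise_iff_get.1 hL.2.1 i j hij).1
  · intro i j hij
    exact (List.pairwise_iff_get.1 hL.2.1 i j hij).2
  · rw [← List.sum_ofFn, List.ofFn_get]
    exact hL.2.2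
  · rintro ⟨n, f⟩ ⟨h1, h2, h3, h4, h5⟩
    have hDec : HDec (List.ofFn f) b := by
      refine ⟨?_, ?_, ?_⟩
      · intro c hc
        rw [List.mem_ofFn] at hc
        obtain ⟨i, rfl⟩ := hc
        exact h2 i
      · rw [List.pairwise_ofFn]
        intro i j hij
        exact ⟨h3 i j hij.le, h4 i j hij⟩
      · rw [List.sum_ofFn]
        exact h5
    have heq : List.ofFn f = L := hdec_unique _ _ b hDec hL
    apply List.equivSigmaTuple.symm.injective
    show List.ofFn f = List.ofFn L.get
    rw [heq, List.ofFn_get]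
end
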